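/- Let x, y ∈ [0,1] and let z be a real number with x·y ≤ z ≤ min(x, y). Then z = min(x, y), or z = x·y, or there exists λ ∈ (0,1) such that z = log_λ(1 + (λ^x − 1)(λ^y − 1)/(λ − 1)). -/

import Mathlib

set_option maxHeartbeats 1000000 in
theorem coherent_extension_same_consequent_is_frank_tnorm (x y z : ℝ)
    (hx : x ∈ Set.Icc (0 : ℝ) 1) (hy : y ∈ Set.Icc (0 : ℝ) 1)
    (hz1 : x * y ≤ z) (hz2 : z ≤ min x y) :
    z = min x y ∨ z = x * y ∨
      ∃ l ∈ Set.Ioo (0 : ℝ) 1,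
        z = Real.logb l (1 + (l ^ x - 1) * (l ^ y - 1) / (l - 1)) := by
  rcases eq_or_lt_of_le hz2 with h2 | h2
  · exact Or.inl h2
  rcases eq_or_lt_of_le hz1 with h1 | h1
  · exact Or.inr (Or.inl h1.symm)
  right; right
  -- basic facts in the strict case
  have hzx : z < x := lt_of_lt_of_le h2 (min_le_left x y)
  have hzy : z < y := lt_of_lt_of_le h2 (min_le_right x y)
  have hz0 : 0 < z := lt_of_le_of_lt (mul_nonneg hx.1 hy.1) h1
  have hx0 : 0 < x := lt_trans hz0 hzx
  have hy0 : 0 < y := lt_trans hz0 hzy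
  have hz1' : z < 1 := lt_of_lt_of_le hzx hx.2
  -- the function H
  set H : ℝ → ℝ := fun l => (l ^ x - 1) * (l ^ y - 1) - (l - 1) * (l ^ z - 1) with hH
  -- the right endpoint l₁
  set s : ℝ := Real.sqrt (x * y / z) with hs
  set l₁ : ℝ := (s + 1) / 2 with hl₁def
  have hs0 : 0 ≤ s := Real.sqrt_nonneg _
  have hs1 : s < 1 := by
    rw [hs, show (1 : ℝ) = Real.sqrt 1 by simp]
    apply Real.sqrt_lt_sqrt (by positivity)
    rw [div_lt_one hz0]; exact h1
  have hl₁0 : 0 < l₁ := by rw [hl₁def]; linarith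
  have hl₁1 : l₁ < 1 := by rw [hl₁def]; linarith
  have hsl₁ : s < l₁ := by rw [hl₁def]; linarith
  have hkey : x * y < z * l₁ ^ 2 := by
    have hsq : s ^ 2 = x * y / z := Real.sq_sqrt (by positivity)
    have : s ^ 2 < l₁ ^ 2 := by nlinarith
    rw [hsq] at this
    rw [div_lt_iff₀ hz0] at this
    nlinarith
  -- the left endpoint a
  set m : ℝ := min (min (x - z) (y - z)) 1 with hm
  have hm0 : 0 < m := by
    rw [hm]; simp only [lt_min_iff]
    exact ⟨⟨by linarith, by linarith⟩, one_pos⟩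
  have hm1 : m ≤ 1 := min_le_right _ _
  have hmx : m ≤ x - z := le_trans (min_le_left _ _) (min_le_left _ _)
  have hmy : m ≤ y - z := le_trans (min_le_left _ _) (min_le_right _ _)
  set l₀ : ℝ := (3 : ℝ)⁻¹ ^ (1 / m) with hl₀def
  have hl₀0 : 0 < l₀ := Real.rpow_pos_of_pos (by norm_num) _
  set a : ℝ := min l₀ (l₁ / 2) with hadef
  have ha0 : 0 < a := lt_min hl₀0 (by linarith)
  have hal₁ : a < l₁ := lt_of_le_of_lt (min_le_right _ _) (by linarith)
  -- key bounds at a : a^(x-z) ≤ 1/3, a^(y-z) ≤ 1/3, a ≤ 1/3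
  have hthird : ∀ t : ℝ, m ≤ t → a ^ t ≤ 1 / 3 := by
    intro t ht
    have h1t : a ^ t ≤ l₀ ^ t :=
      Real.rpow_le_rpow ha0.le (min_le_left _ _) (by linarith)
    have h2t : l₀ ^ t = (3 : ℝ)⁻¹ ^ (1 / m * t) := by
      rw [hl₀def, ← Real.rpow_mul (by norm_num)]
    have h3t : (1 : ℝ) ≤ 1 / m * t := by
      rw [div_mul_eq_mul_div, one_mul, le_div_iff₀ hm0]
      linarith
    have h4t : (3 : ℝ)⁻¹ ^ (1 / m * t) ≤ (3 : ℝ)⁻¹ ^ (1 : ℝ) :=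
      Real.rpow_le_rpow_of_exponent_ge (by norm_num) (by norm_num) h3t
    rw [Real.rpow_one] at h4t
    calc a ^ t ≤ l₀ ^ t := h1t
      _ = _ := h2t
      _ ≤ (3 : ℝ)⁻¹ := h4t
      _ = 1 / 3 := by norm_num
  have ha3 : a ≤ 1 / 3 := by
    have := hthird 1 hm1
    rwa [Real.rpow_one] at this
  clear_value s l₁ m l₀ a
  -- H a > 0
  have hHa : 0 < H a := by
    have hpz : 0 < a ^ z := Real.rpow_pos_of_pos ha0 _
    have hAx : a ^ x = a ^ z * a ^ (x - z) := by
      rw [← Real.rpow_add ha0]; ring_nf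
    have hAy : a ^ y = a ^ z * a ^ (y - z) := by
      rw [← Real.rpow_add ha0]; ring_nf
    have hx3 : a ^ x ≤ a ^ z * (1 / 3) := by
      rw [hAx]; exact mul_le_mul_of_nonneg_left (hthird _ hmx) hpz.le
    have hy3 : a ^ y ≤ a ^ z * (1 / 3) := by
      rw [hAy]; exact mul_le_mul_of_nonneg_left (hthird _ hmy) hpz.le
    have haz : a * a ^ z ≤ (1 / 3) * a ^ z :=
      mul_le_mul_of_nonneg_right ha3 hpz.le
    have hprod : 0 ≤ a ^ x * a ^ y := by positivity
    show (0:ℝ) < (a ^ x - 1) * (a ^ y - 1) - (a - 1) * (a ^ z - 1)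
    nlinarith [hx3, hy3, haz, hprod, ha0, hpz]
  -- H l₁ < 0
  have hHl₁ : H l₁ < 0 := by
    set L : ℝ := -Real.log l₁ with hL
    have hL0 : 0 ≤ L := by
      rw [hL]; simp only [Left.nonneg_neg_iff]
      exact Real.log_nonpos hl₁0.le hl₁1.le
    have hLb : L ≤ l₁⁻¹ - 1 := by
      have := Real.log_le_sub_one_of_pos (inv_pos.2 hl₁0)
      rwa [Real.log_inv] at this
    have hexp : ∀ t : ℝ, 0 ≤ t → 1 - l₁ ^ t ≤ t * L := by
      intro t ht
      have h1t : Real.log l₁ * t + 1 ≤ Real.exp (Real.log l₁ * t) :=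
        Real.add_one_le_exp _
      rw [← Real.rpow_def_of_pos hl₁0] at h1t
      rw [hL]; nlinarith
    have hPx := hexp x hx0.le
    have hPy := hexp y hy0.le
    have hPx0 : 0 ≤ 1 - l₁ ^ x := by
      have := Real.rpow_le_one hl₁0.le hl₁1.le hx0.le; linarith
    have hPy0 : 0 ≤ 1 - l₁ ^ y := by
      have := Real.rpow_le_one hl₁0.le hl₁1.le hy0.le; linarith
    -- Bernoulli for z
    have hD : l₁ ^ z ≤ z * l₁ + (1 - z) * 1 := by
      have := Real.geom_mean_le_arith_mean2_weighted hz0.le (by linarith : (0:ℝ) ≤ 1 - z)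
        hl₁0.le zero_le_one (by ring)
      rwa [Real.one_rpow, mul_one] at this
    -- chain of inequalities
    have hPQ : (1 - l₁ ^ x) * (1 - l₁ ^ y) ≤ (x * L) * (y * L) :=
      mul_le_mul hPx hPy hPy0 (mul_nonneg hx0.le hL0)
    have hL2 : L * L ≤ (l₁⁻¹ - 1) * (l₁⁻¹ - 1) :=
      mul_le_mul hLb hLb hL0 (by linarith)
    have hinv : l₁⁻¹ - 1 = (1 - l₁) / l₁ := by field_simp
    have hub : (x * L) * (y * L) ≤ x * y * ((1 - l₁) / l₁) ^ 2 := by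
      have hxy0 : 0 ≤ x * y := mul_nonneg hx0.le hy0.le
      calc (x * L) * (y * L) = x * y * (L * L) := by ring
        _ ≤ x * y * ((l₁⁻¹ - 1) * (l₁⁻¹ - 1)) :=
            mul_le_mul_of_nonneg_left hL2 hxy0
        _ = x * y * ((1 - l₁) / l₁) ^ 2 := by rw [hinv]; ring
    have hlt : x * y * ((1 - l₁) / l₁) ^ 2 < z * (1 - l₁) ^ 2 := by
      rw [div_pow, ← mul_div_assoc, div_lt_iff₀ (by positivity : (0:ℝ) < l₁ ^ 2)]
      have h1l : 0 < (1 - l₁) ^ 2 := pow_pos (by linarith) 2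
      nlinarith [mul_lt_mul_of_pos_right hkey h1l]
    have hRz : z * (1 - l₁) ≤ 1 - l₁ ^ z := by linarith
    have hRlb : z * (1 - l₁) ^ 2 ≤ (1 - l₁) * (1 - l₁ ^ z) := by
      have h1l : 0 ≤ 1 - l₁ := by linarith
      nlinarith [mul_le_mul_of_nonneg_left hRz h1l]
    have hfin : (1 - l₁ ^ x) * (1 - l₁ ^ y) < (1 - l₁) * (1 - l₁ ^ z) := by
      calc (1 - l₁ ^ x) * (1 - l₁ ^ y) ≤ (x * L) * (y * L) := hPQ
        _ ≤ x * y * ((1 - l₁) / l₁) ^ 2 := hub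
        _ < z * (1 - l₁) ^ 2 := hlt
        _ ≤ (1 - l₁) * (1 - l₁ ^ z) := hRlb
    show (l₁ ^ x - 1) * (l₁ ^ y - 1) - (l₁ - 1) * (l₁ ^ z - 1) < 0
    nlinarith [hfin]
  -- continuity of H on [a, l₁]
  have hcont : ContinuousOn H (Set.Icc a l₁) := by
    apply continuousOn_of_forall_continuousAt
    intro l hl
    have hl0 : l ≠ 0 := by
      have : 0 < l := lt_of_lt_of_le ha0 hl.1
      exact ne_of_gt this
    have cx : ContinuousAt (fun t : ℝ => t ^ x) l :=
      Real.continuousAt_rpow_const l x (Or.inl hl0)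
    have cy : ContinuousAt (fun t : ℝ => t ^ y) l :=
      Real.continuousAt_rpow_const l y (Or.inl hl0)
    have cz : ContinuousAt (fun t : ℝ => t ^ z) l :=
      Real.continuousAt_rpow_const l z (Or.inl hl0)
    exact ((cx.sub continuousAt_const).mul (cy.sub continuousAt_const)).sub
      (((continuousAt_id).sub continuousAt_const).mul (cz.sub continuousAt_const))
  -- intermediate value theorem
  have hmem : (0 : ℝ) ∈ Set.Icc (H l₁) (H a) := ⟨hHl₁.le, hHa.le⟩
  obtain ⟨c, hc, hHc⟩ := intermediate_value_Icc' hal₁.le hcont hmem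
  have hc0 : 0 < c := lt_of_lt_of_le ha0 hc.1
  have hc1 : c < 1 := lt_of_le_of_lt hc.2 hl₁1
  refine ⟨c, ⟨hc0, hc1⟩, ?_⟩
  have hcne1 : c - 1 ≠ 0 := by linarith
  have heq : (c ^ x - 1) * (c ^ y - 1) = (c - 1) * (c ^ z - 1) := by
    have hc' : (c ^ x - 1) * (c ^ y - 1) - (c - 1) * (c ^ z - 1) = 0 := hHc
    linarith
  have harg : 1 + (c ^ x - 1) * (c ^ y - 1) / (c - 1) = c ^ z := by
    rw [heq, mul_comm, mul_div_assoc, div_self hcne1, mul_one]; ring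
  rw [harg]
  exact (Real.logb_rpow hc0 (by linarith)).symm
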